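/- arXiv:2006.11189 — 2 statements merged into one kernel-verified Lean document; each statement's English description precedes it below -/
import Mathlib

section
/- Let (𝒳, ω) be a left Frobenius pair in an abelian category 𝒞. Then for every n ≥ 0, the pair (𝒳, 𝒳^⊥) is a complete cotorsion pair cut along 𝒳^∧_n. -/
namespace CutPaper

open CategoryTheory CategoryTheory.Limits CategoryTheory.Abelian ZeroObject

universe w v u

variable {C : Type u} [Category.{v} C] [Abelian C]

/-- There exists a short exact sequence `0 ⟶ X ⟶ Y ⟶ Z ⟶ 0` in `C`. -/
def SES (X Y Z : C) : Prop :=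
  ∃ (f : X ⟶ Y) (g : Y ⟶ Z) (zero : f ≫ g = 0),
    (ShortComplex.mk f g zero).ShortExact

/-- A class of objects is closed under isomorphisms. -/
def ClosedUnderIso (A : Set C) : Prop :=
  ∀ ⦃X Y : C⦄, (X ≅ Y) → X ∈ A → Y ∈ A

/-- A class of objects is closed under direct summands (i.e. retracts). -/
def ClosedUnderDirectSummands (A : Set C) : Prop :=
  ∀ ⦃X Y : C⦄ (i : X ⟶ Y) (r : Y ⟶ X), i ≫ r = 𝟙 X → Y ∈ A → X ∈ A

/-- A class of objects is closed under extensions. -/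
def ClosedUnderExtensions (A : Set C) : Prop :=
  ∀ ⦃X Y Z : C⦄, SES X Y Z → X ∈ A → Z ∈ A → Y ∈ A

/-- A class of objects is closed under kernels of epimorphisms between its objects. -/
def ClosedUnderEpiKernels (A : Set C) : Prop :=
  ∀ ⦃X Y Z : C⦄, SES X Y Z → Y ∈ A → Z ∈ A → X ∈ A

/-- A class of objects is closed under cokernels of monomorphisms between its objects. -/
def ClosedUnderMonoCokernels (A : Set C) : Prop :=
  ∀ ⦃X Y Z : C⦄, SES X Y Z → X ∈ A → Y ∈ A → Z ∈ A

/-- A class is left thick if it is closed under extensions, epi-kernels and direct summands. -/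
def LeftThick (A : Set C) : Prop :=
  ClosedUnderExtensions A ∧ ClosedUnderEpiKernels A ∧ ClosedUnderDirectSummands A

/-- A class is right thick if closed under extensions, mono-cokernels and direct summands. -/
def RightThick (A : Set C) : Prop :=
  ClosedUnderExtensions A ∧ ClosedUnderMonoCokernels A ∧ ClosedUnderDirectSummands A

/-- A class is thick if it is both left and right thick. -/
def IsThickClass (A : Set C) : Prop := LeftThick A ∧ RightThick A

/-- The smallest thick class containing `F`. -/
def ThickClosure (F : Set C) : Set C := ⋂₀ {T : Set C | IsThickClass T ∧ F ⊆ T}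

/-- A class is closed under finite (binary) coproducts. -/
def ClosedUnderBinaryCoproducts (A : Set C) : Prop :=
  ∀ ⦃X Y : C⦄, X ∈ A → Y ∈ A → (X ⊞ Y) ∈ A

/-- `ω` is a relative cogenerator in `A`: `ω ⊆ A` and every `X ∈ A` fits in a short
exact sequence `0 → X → W → X' → 0` with `W ∈ ω`, `X' ∈ A`. -/
def IsRelativeCogenerator (ω A : Set C) : Prop :=
  ω ⊆ A ∧ ∀ X ∈ A, ∃ W X', W ∈ ω ∧ X' ∈ A ∧ SES X W X'

/-- `ν` is a relative generator in `ω`: `ν ⊆ ω` and every `W ∈ ω` fits in a short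
exact sequence `0 → W' → V → W → 0` with `V ∈ ν`, `W' ∈ ω`. -/
def IsRelativeGenerator (ν ω : Set C) : Prop :=
  ν ⊆ ω ∧ ∀ W ∈ ω, ∃ V W', V ∈ ν ∧ W' ∈ ω ∧ SES W' V W

/-- The objects of `B`-resolution dimension at most `n` (the class `B^∧_n`). -/
def ResDimLE (B : Set C) : ℕ → Set C
  | 0 => {X | ∃ B₀ ∈ B, Nonempty (X ≅ B₀)}
  | (n + 1) => ResDimLE B n ∪ {X | ∃ K B₀, K ∈ ResDimLE B n ∧ B₀ ∈ B ∧ SES K B₀ X}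

/-- The class `B^∧` of objects of finite `B`-resolution dimension. -/
def ResFin (B : Set C) : Set C := {X | ∃ n, X ∈ ResDimLE B n}

/-- The `B`-resolution dimension of an object, valued in `ℕ∞`. -/
noncomputable def resDim (B : Set C) (X : C) : ℕ∞ :=
  sInf ((fun n : ℕ => (n : ℕ∞)) '' {n | X ∈ ResDimLE B n})

/-- The objects of `B`-coresolution dimension at most `n` (the class `B^∨_n`). -/
def CoresDimLE (B : Set C) : ℕ → Set C
  | 0 => {X | ∃ B₀ ∈ B, Nonempty (X ≅ B₀)}
  | (n + 1) => CoresDimLE B n ∪ {X | ∃ B₀ K, B₀ ∈ B ∧ K ∈ CoresDimLE B n ∧ SES X B₀ K}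

/-- The `B`-coresolution dimension of an object, valued in `ℕ∞`. -/
noncomputable def coresDim (B : Set C) (X : C) : ℕ∞ :=
  sInf ((fun n : ℕ => (n : ℕ∞)) '' {n | X ∈ CoresDimLE B n})

/-- The class of `(𝒳, 𝒴)`-Gorenstein projective objects: 0-th cycles of exact,
`Hom(-, 𝒴)`-acyclic complexes with components in `𝒳`. -/
def GorensteinProj (𝒳 𝒴 : Set C) : Set C :=
  {M | ∃ K : ChainComplex C ℤ,
    (∀ m : ℤ, K.X m ∈ 𝒳) ∧
    (∀ m : ℤ, K.ExactAt m) ∧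
    (∀ Y₀ ∈ 𝒴, ∀ m : ℤ, ∀ f : K.X m ⟶ Y₀, K.d (m + 1) m ≫ f = 0 →
      ∃ g : K.X (m - 1) ⟶ Y₀, K.d m (m - 1) ≫ g = f) ∧
    Nonempty (M ≅ K.cycles 0)}

section HasExt

variable [HasExt.{w} C]

/-- `Ext¹(A, B) = 0`. -/
def ext1Zero (A B : C) : Prop := Subsingleton (Abelian.Ext.{w} A B 1)

/-- `Extⁱ(A, B) = 0` for all `i ≥ 1`. -/
def extVanish (A B : C) : Prop := ∀ i : ℕ, 1 ≤ i → Subsingleton (Abelian.Ext.{w} A B i)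

/-- `Extⁱ(X, Y) = 0` for all `i ≥ 1`, `X ∈ 𝒜`, `Y ∈ ℬ`. -/
def ExtPairVanish (𝒜 ℬ : Set C) : Prop := ∀ X ∈ 𝒜, ∀ Y ∈ ℬ, extVanish.{w} X Y

/-- The right `Ext¹`-orthogonal complement `𝒜^{⊥1}`. -/
def rightPerp1 (𝒜 : Set C) : Set C := {N | ∀ X ∈ 𝒜, ext1Zero.{w} X N}

/-- The total right orthogonal complement `𝒜^{⊥}`. -/
def rightPerp (𝒜 : Set C) : Set C := {N | ∀ X ∈ 𝒜, extVanish.{w} X N}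

/-- The left `Ext¹`-orthogonal complement `^{⊥1}ℬ`. -/
def leftPerp1 (ℬ : Set C) : Set C := {M | ∀ Y ∈ ℬ, ext1Zero.{w} M Y}

/-- `(𝒜, ℬ)` is a left cotorsion pair cut along `𝒮`. -/
def LeftCutCotorsion (𝒜 ℬ 𝒮 : Set C) : Prop :=
  ClosedUnderDirectSummands 𝒜 ∧ 𝒜 ∩ 𝒮 = leftPerp1.{w} ℬ ∩ 𝒮

/-- `(𝒜, ℬ)` is a complete left cotorsion pair cut along `𝒮`. -/
def CompleteLeftCutCotorsion (𝒜 ℬ 𝒮 : Set C) : Prop :=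
  LeftCutCotorsion.{w} 𝒜 ℬ 𝒮 ∧ ∀ S ∈ 𝒮, ∃ B₀ A₀, B₀ ∈ ℬ ∧ A₀ ∈ 𝒜 ∧ SES B₀ A₀ S

/-- `(𝒜, ℬ)` is a right cotorsion pair cut along `𝒮`. -/
def RightCutCotorsion (𝒜 ℬ 𝒮 : Set C) : Prop :=
  ClosedUnderDirectSummands ℬ ∧ ℬ ∩ 𝒮 = rightPerp1.{w} 𝒜 ∩ 𝒮

/-- `(𝒜, ℬ)` is a complete right cotorsion pair cut along `𝒮`. -/
def CompleteRightCutCotorsion (𝒜 ℬ 𝒮 : Set C) : Prop :=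
  RightCutCotorsion.{w} 𝒜 ℬ 𝒮 ∧ ∀ S ∈ 𝒮, ∃ B₀ A₀, B₀ ∈ ℬ ∧ A₀ ∈ 𝒜 ∧ SES S B₀ A₀

/-- `(𝒜, ℬ)` is a complete cotorsion pair cut along `𝒮`. -/
def CompleteCutCotorsion (𝒜 ℬ 𝒮 : Set C) : Prop :=
  CompleteLeftCutCotorsion.{w} 𝒜 ℬ 𝒮 ∧ CompleteRightCutCotorsion.{w} 𝒜 ℬ 𝒮

/-- `(𝒜, ℬ)` is a complete left cotorsion pair in `C`. -/
def CompleteLeftCotorsionPair (𝒜 ℬ : Set C) : Prop :=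
  𝒜 = leftPerp1.{w} ℬ ∧ ∀ X : C, ∃ B₀ A₀, B₀ ∈ ℬ ∧ A₀ ∈ 𝒜 ∧ SES B₀ A₀ X

/-- `(𝒜, ℬ)` is a complete cotorsion pair in `C`. -/
def CompleteCotorsionPair (𝒜 ℬ : Set C) : Prop :=
  CompleteLeftCotorsionPair.{w} 𝒜 ℬ ∧ ℬ = rightPerp1.{w} 𝒜 ∧
    ∀ X : C, ∃ B₀ A₀, B₀ ∈ ℬ ∧ A₀ ∈ 𝒜 ∧ SES X B₀ A₀

/-- `(𝒳, ω)` is a left Frobenius pair in `C`. -/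
def LeftFrobenius (𝒳 ω : Set C) : Prop :=
  LeftThick 𝒳 ∧ ClosedUnderDirectSummands ω ∧
    ExtPairVanish.{w} 𝒳 ω ∧ IsRelativeCogenerator ω 𝒳

/-- `(𝒳, ω)` is a left Frobenius pair cut along `𝒮`. -/
def LeftFrobeniusCutAlong (𝒳 ω 𝒮 : Set C) : Prop :=
  LeftThick 𝒳 ∧
  LeftFrobenius.{w} (𝒳 ∩ 𝒮) (ω ∩ 𝒮) ∧
  (ExtPairVanish.{w} (ω ∩ 𝒮) ω ∧ IsRelativeGenerator (ω ∩ 𝒮) ω) ∧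
  (ClosedUnderExtensions ω ∧ ClosedUnderDirectSummands ω)

/-- `(𝒜, ℬ)` is a left weak AB context in `C`. -/
def LeftWeakABContext (𝒜 ℬ : Set C) : Prop :=
  LeftFrobenius.{w} 𝒜 (𝒜 ∩ ℬ) ∧ RightThick ℬ ∧ ℬ ⊆ ResFin 𝒜

/-- `(𝒜, ℬ)` is a left weak AB context cut along `𝒮`. -/
def LeftWeakABContextCutAlong (𝒜 ℬ 𝒮 : Set C) : Prop :=
  LeftFrobeniusCutAlong.{w} 𝒜 (𝒜 ∩ ℬ) 𝒮 ∧ RightThick (ℬ ∩ 𝒮) ∧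
    ℬ ∩ 𝒮 ⊆ ResFin (𝒜 ∩ 𝒮)

/-- `(𝒳, 𝒴)` is a GP-admissible pair. -/
def GPAdmissible (𝒳 𝒴 : Set C) : Prop :=
  ExtPairVanish.{w} 𝒳 𝒴 ∧
  (∀ M : C, ∃ X₀, X₀ ∈ 𝒳 ∧ ∃ p : X₀ ⟶ M, Epi p) ∧
  ClosedUnderBinaryCoproducts 𝒳 ∧ ClosedUnderBinaryCoproducts 𝒴 ∧
  ClosedUnderExtensions 𝒳 ∧
  IsRelativeCogenerator (𝒳 ∩ 𝒴) 𝒳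

/-- The class `ℰ_l(𝒜, ℬ)` of objects admitting a suitable left approximation. -/
def EClassLeft (𝒜 ℬ : Set C) : Set C :=
  {X | ∃ B₀ A₀, B₀ ∈ ℬ ∧ A₀ ∈ 𝒜 ∧ SES B₀ A₀ X}

/-- The maximal left cotorsion cut `𝕊_l(𝒜, ℬ)`. -/
def MaxLeftCut (𝒜 ℬ : Set C) : Set C :=
  ⋃₀ {𝒮 | CompleteLeftCutCotorsion.{w} 𝒜 ℬ 𝒮}

/-- `pd(M) ≤ n`, via vanishing of `Ext` in degrees `> n`. -/
def pdLE (M : C) (n : ℕ) : Prop :=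
  ∀ i : ℕ, n < i → ∀ N : C, Subsingleton (Abelian.Ext.{w} M N i)

/-- The projective dimension of an object, valued in `ℕ∞`. -/
noncomputable def pd (M : C) : ℕ∞ :=
  sInf ((fun n : ℕ => (n : ℕ∞)) '' {n | pdLE.{w} M n})

/-- The projective dimension of a class of objects. -/
noncomputable def pdClass (𝒜 : Set C) : ℕ∞ := ⨆ M ∈ 𝒜, pd.{w} M

/-- The `𝔓_𝒮`-condition of the second correspondence theorem. -/
def PPair (𝒮 ℱ 𝒢 : Set C) : Prop :=
  CompleteCutCotorsion.{w} ℱ 𝒢 (ThickClosure ℱ) ∧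
  ExtPairVanish.{w} ℱ 𝒢 ∧
  IsRelativeGenerator (ℱ ∩ 𝒢 ∩ 𝒮) (ℱ ∩ 𝒢) ∧
  IsRelativeCogenerator (ℱ ∩ 𝒢 ∩ 𝒮) (ℱ ∩ 𝒢)

end HasExt

/-- The class of projective objects of `C`. -/
def ProjClass (C : Type u) [Category.{v} C] : Set C := {P : C | Projective P}

section HasExt
variable (C) [HasExt.{w} C]

/-- The finitistic dimension of `C`. -/
noncomputable def Findim : ℕ∞ := pdClass.{w} (ResFin (ProjClass C))

end HasExt




/-! ### Auxiliary lemmas -/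

section Aux

/-- SES `0 ⟶ X ⟶ Y` from an iso. -/
lemma SES_of_iso {X Y : C} (e : X ≅ Y) : SES (0 : C) X Y := by
  refine ⟨0, e.hom, by simp, ?_⟩
  have : Mono (0 : (0 : C) ⟶ X) := by
    constructor
    intro Z g h _
    exact (isZero_zero C).eq_of_tgt g h
  haveI := this
  exact ShortComplex.ShortExact.mk (by rw [ShortComplex.exact_iff_mono _ rfl]; infer_instance)

section Pushout

variable {A B Z D P : C} {f : A ⟶ B} {g : B ⟶ Z} {u : A ⟶ D}
  {inl : B ⟶ P} {inr : D ⟶ P}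

/-- The middle short exact sequence `A → B ⊞ D → P` of a pushout square. -/
lemma pushout_middle_shortExact (hP : IsPushout f u inl inr) [Mono f] :
    (ShortComplex.mk (biprod.lift f (-u)) (biprod.desc inl inr)
      (by simp [hP.w])).ShortExact := by
  haveI : Mono (biprod.lift f (-u)) := by
    have h : biprod.lift f (-u) ≫ biprod.fst = f := biprod.lift_fst _ _
    exact mono_of_mono_fac h
  have hcolim := hP.isColimitCokernelCofork
  haveI : Epi (biprod.desc inl inr) :=
    epi_of_isColimit_cofork hcolim
  exact ShortComplex.ShortExact.mk
    (ShortComplex.exact_of_g_is_cokernel _ hcolim)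

/-- Pushing out a short exact sequence `0 → A → B → Z → 0` along `u : A ⟶ D`
gives a short exact sequence `0 → D → P → Z → 0`. -/
lemma ses_pushout₁ (hP : IsPushout f u inl inr) {w : f ≫ g = 0}
    (hS : (ShortComplex.mk f g w).ShortExact) : SES D P Z := by
  haveI hmf : Mono f := hS.mono_f
  haveI heg : Epi g := hS.epi_g
  have hmid := pushout_middle_shortExact hP
  have hq : f ≫ g = u ≫ (0 : D ⟶ Z) := by simpa using w
  have hinlq : inl ≫ hP.desc g 0 hq = g := hP.inl_desc _ _ _
  refine ⟨inr, hP.desc g 0 hq, hP.inr_desc _ _ _, ?_⟩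
  have hmono : Mono inr := by
    rw [Preadditive.mono_iff_cancel_zero]
    intro T x hx
    have hx' : (x ≫ biprod.inr) ≫ biprod.desc inl inr = 0 := by
      simp [hx]
    obtain ⟨T', π₁, hπ₁, a, ha⟩ := hmid.exact.exact_up_to_refinements _ hx'
    dsimp at ha
    have ha1 : a ≫ f = 0 := by
      have h2 := ha =≫ biprod.fst
      simpa using h2.symm
    have ha0 : a = 0 := zero_of_comp_mono f ha1
    have hx0 : π₁ ≫ x = 0 := by
      have h2 := ha =≫ biprod.snd
      simp [ha0] at h2
      simpa using h2
    exact zero_of_epi_comp π₁ hx0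
  have hepi : Epi (hP.desc g 0 hq) := by
    have : Epi (inl ≫ hP.desc g 0 hq) := by rw [hinlq]; infer_instance
    exact epi_of_epi inl _
  have hexact : (ShortComplex.mk inr (hP.desc g 0 hq) (hP.inr_desc _ _ _)).Exact := by
    rw [ShortComplex.exact_iff_exact_up_to_refinements]
    intro T y hy
    dsimp at y hy ⊢
    haveI : Epi (biprod.desc inl inr) := hmid.epi_g
    obtain ⟨T', π₁, hπ₁, x, hx⟩ :=
      surjective_up_to_refinements_of_epi (biprod.desc inl inr) y
    have hdesc : biprod.desc inl inr = biprod.fst ≫ inl + biprod.snd ≫ inr := by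
      ext <;> simp
    have hbg : (x ≫ biprod.fst) ≫ g = 0 := by
      have h2 := hx =≫ hP.desc g 0 hq
      rw [Category.assoc, hy, comp_zero, Category.assoc, hdesc] at h2
      simp only [Preadditive.comp_add, Preadditive.add_comp, Category.assoc,
        hinlq, hP.inr_desc, comp_zero, add_zero] at h2
      rw [← Category.assoc] at h2
      exact h2.symm
    obtain ⟨T'', π₂, hπ₂, a, ha⟩ := hS.exact.exact_up_to_refinements _ hbg
    dsimp at ha
    refine ⟨T'', π₂ ≫ π₁, epi_comp _ _, a ≫ u + π₂ ≫ x ≫ biprod.snd, ?_⟩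
    have e2 : π₂ ≫ x ≫ biprod.fst ≫ inl = a ≫ u ≫ inr := by
      calc π₂ ≫ x ≫ biprod.fst ≫ inl = (π₂ ≫ x ≫ biprod.fst) ≫ inl := by
            simp only [Category.assoc]
        _ = (a ≫ f) ≫ inl := by rw [ha]
        _ = a ≫ u ≫ inr := by rw [Category.assoc, hP.w]
    calc (π₂ ≫ π₁) ≫ y = π₂ ≫ x ≫ biprod.desc inl inr := by
          rw [Category.assoc, hx]
      _ = π₂ ≫ x ≫ biprod.fst ≫ inl + π₂ ≫ x ≫ biprod.snd ≫ inr := by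
          rw [hdesc]
          simp only [Preadditive.comp_add, Preadditive.add_comp, Category.assoc]
      _ = a ≫ u ≫ inr + π₂ ≫ x ≫ biprod.snd ≫ inr := by rw [e2]
      _ = (a ≫ u + π₂ ≫ x ≫ biprod.snd) ≫ inr := by
          simp only [Preadditive.add_comp, Category.assoc]
  haveI := hmono
  haveI := hepi
  exact ShortComplex.ShortExact.mk hexact

/-- If `0 → K → X → S' → 0` is exact and `m : X ⟶ W` is a mono, then for the pushout `P`
of `m` and `g` there is a short exact sequence `0 → K → W → P → 0`. -/
lemma ses_pushout₂ {K X S' W P : C} {f : K ⟶ X} {g : X ⟶ S'} {m : X ⟶ W}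
    {inl : W ⟶ P} {inr : S' ⟶ P} (hP : IsPushout m g inl inr) [hm : Mono m]
    {w : f ≫ g = 0} (hS : (ShortComplex.mk f g w).ShortExact) :
    SES K W P := by
  haveI hmf : Mono f := hS.mono_f
  haveI heg : Epi g := hS.epi_g
  have hmid := pushout_middle_shortExact hP
  have hzero : (f ≫ m) ≫ inl = 0 := by
    rw [Category.assoc, hP.w, ← Category.assoc, w, zero_comp]
  refine ⟨f ≫ m, inl, hzero, ?_⟩
  haveI hmono : Mono (f ≫ m) := mono_comp _ _
  have hdesc : biprod.desc inl inr = biprod.fst ≫ inl + biprod.snd ≫ inr := by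
    ext <;> simp
  haveI hepi : Epi inl := by
    rw [epi_iff_surjective_up_to_refinements]
    intro T y
    haveI : Epi (biprod.desc inl inr) := hmid.epi_g
    obtain ⟨T', π₁, hπ₁, x, hx⟩ :=
      surjective_up_to_refinements_of_epi (biprod.desc inl inr) y
    obtain ⟨T'', π₂, hπ₂, b, hb⟩ :=
      surjective_up_to_refinements_of_epi g (x ≫ biprod.snd)
    refine ⟨T'', π₂ ≫ π₁, epi_comp _ _, π₂ ≫ x ≫ biprod.fst + b ≫ m, ?_⟩
    have e2 : π₂ ≫ x ≫ biprod.snd ≫ inr = b ≫ m ≫ inl := by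
      calc π₂ ≫ x ≫ biprod.snd ≫ inr = (π₂ ≫ x ≫ biprod.snd) ≫ inr := by
            simp only [Category.assoc]
        _ = (b ≫ g) ≫ inr := by rw [hb]
        _ = b ≫ m ≫ inl := by rw [Category.assoc, ← hP.w]
    calc (π₂ ≫ π₁) ≫ y = π₂ ≫ x ≫ biprod.desc inl inr := by
          rw [Category.assoc, hx]
      _ = π₂ ≫ x ≫ biprod.fst ≫ inl + π₂ ≫ x ≫ biprod.snd ≫ inr := by
          rw [hdesc]
          simp only [Preadditive.comp_add, Preadditive.add_comp, Category.assoc]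
      _ = π₂ ≫ x ≫ biprod.fst ≫ inl + b ≫ m ≫ inl := by rw [e2]
      _ = (π₂ ≫ x ≫ biprod.fst + b ≫ m) ≫ inl := by
          simp only [Preadditive.add_comp, Category.assoc]
  have hexact : (ShortComplex.mk (f ≫ m) inl hzero).Exact := by
    rw [ShortComplex.exact_iff_exact_up_to_refinements]
    intro T x hx
    dsimp at x hx ⊢
    have hx' : (x ≫ biprod.inl) ≫ biprod.desc inl inr = 0 := by
      simp [hx]
    obtain ⟨T', π₁, hπ₁, a, ha⟩ := hmid.exact.exact_up_to_refinements _ hx'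
    dsimp at ha
    have hag : a ≫ g = 0 := by
      have h2 := ha =≫ biprod.snd
      simp only [Category.assoc, biprod.inl_snd, comp_zero, biprod.lift_snd,
        Preadditive.comp_neg] at h2
      rw [← neg_eq_zero]
      exact h2.symm
    obtain ⟨T'', π₂, hπ₂, k, hk⟩ := hS.exact.exact_up_to_refinements _ hag
    dsimp at hk
    refine ⟨T'', π₂ ≫ π₁, epi_comp _ _, k, ?_⟩
    have h3 : π₁ ≫ x = a ≫ m := by
      have h2 := ha =≫ biprod.fst
      simpa using h2
    calc (π₂ ≫ π₁) ≫ x = π₂ ≫ a ≫ m := by rw [Category.assoc, h3]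
      _ = (π₂ ≫ a) ≫ m := by rw [Category.assoc]
      _ = (k ≫ f) ≫ m := by rw [hk]
      _ = k ≫ f ≫ m := by rw [Category.assoc]
  exact ShortComplex.ShortExact.mk hexact

end Pushout

section ExtAux

variable [HasExt.{w} C]

/-- If `Ext¹(X₃, X₁)` vanishes, then in any short exact sequence `X₃` is a retract
of `X₂`. -/
lemma retract_of_ses_of_ext1 {S : ShortComplex C} (hS : S.ShortExact)
    (h : Subsingleton (Abelian.Ext.{w} S.X₃ S.X₁ 1)) :
    ∃ (i : S.X₃ ⟶ S.X₂) (r : S.X₂ ⟶ S.X₃), i ≫ r = 𝟙 S.X₃ := by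
  letI := HasDerivedCategory.standard C
  have hδ : hS.singleδ = 0 := by
    rw [← hS.extClass_hom, Subsingleton.elim hS.extClass 0, Abelian.Ext.zero_hom]
  obtain ⟨σ, hσ⟩ := Pretriangulated.Triangle.coyoneda_exact₃ _
    (hS.singleTriangle_distinguished) (𝟙 _)
    (by
      have : hS.singleTriangle.mor₃ = hS.singleδ := rfl
      rw [this, hδ]
      exact comp_zero)
  obtain ⟨σ, hσ⟩ : ∃ σ' : (DerivedCategory.singleFunctor C 0).obj S.X₃ ⟶
      (DerivedCategory.singleFunctor C 0).obj S.X₂,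
      𝟙 _ = σ' ≫ (DerivedCategory.singleFunctor C 0).map S.g := ⟨σ, hσ⟩
  let H := DerivedCategory.homologyFunctor C 0
  let e : DerivedCategory.singleFunctor C 0 ⋙ H ≅ 𝟭 C :=
    Functor.isoWhiskerRight ((SingleFunctors.evaluation _ _ (0 : ℤ)).mapIso
      (DerivedCategory.singleFunctorsPostcompQIso C)) H ≪≫
    Functor.associator _ _ _ ≪≫
    Functor.isoWhiskerLeft (HomologicalComplex.single C (ComplexShape.up ℤ) 0)
      (DerivedCategory.homologyFunctorFactors C 0) ≪≫
    HomologicalComplex.homologyFunctorSingleIso C (ComplexShape.up ℤ) 0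
  refine ⟨e.inv.app S.X₃ ≫ H.map σ ≫ e.hom.app S.X₂, S.g, ?_⟩
  have hnat : e.hom.app S.X₂ ≫ S.g =
      H.map ((DerivedCategory.singleFunctor C 0).map S.g) ≫ e.hom.app S.X₃ :=
    (e.hom.naturality S.g).symm
  rw [Category.assoc, Category.assoc, hnat, ← Category.assoc (H.map σ), ← H.map_comp]
  have hm2 : hS.singleTriangle.mor₂ = (DerivedCategory.singleFunctor C 0).map S.g := rfl
  rw [← hσ]
  simp [H]

lemma ext_subsingleton_of_retract_right {X Y Z : C} {n : ℕ} (i : Y ⟶ Z) (r : Z ⟶ Y)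
    (hir : i ≫ r = 𝟙 Y) (h : Subsingleton (Abelian.Ext.{w} X Z n)) :
    Subsingleton (Abelian.Ext.{w} X Y n) := by
  constructor
  intro a b
  have key : ∀ c : Abelian.Ext.{w} X Y n,
      c = (c.comp (Abelian.Ext.mk₀ i) (add_zero n)).comp (Abelian.Ext.mk₀ r) (add_zero n) := by
    intro c
    rw [Abelian.Ext.comp_assoc_of_third_deg_zero, Abelian.Ext.mk₀_comp_mk₀, hir,
      Abelian.Ext.comp_mk₀_id]
  rw [key a, key b, Subsingleton.elim (a.comp (Abelian.Ext.mk₀ i) (add_zero n))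
    (b.comp (Abelian.Ext.mk₀ i) (add_zero n))]

/-- LES: vanishing at `X₂` in degree `n` and at `X₁` in degree `n+1` gives vanishing
at `X₃` in degree `n`. -/
lemma ext_subsingleton_X₃ {S : ShortComplex C} (hS : S.ShortExact) (X : C) (n : ℕ)
    (h₂ : Subsingleton (Abelian.Ext.{w} X S.X₂ n))
    (h₁ : Subsingleton (Abelian.Ext.{w} X S.X₁ (n + 1))) :
    Subsingleton (Abelian.Ext.{w} X S.X₃ n) := by
  have key : ∀ x : Abelian.Ext.{w} X S.X₃ n, x = 0 := by
    intro x
    obtain ⟨x₂, hx₂⟩ := Abelian.Ext.covariant_sequence_exact₃ X hS x rfl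
      (Subsingleton.elim _ _)
    rw [← hx₂, Subsingleton.elim x₂ 0, Abelian.Ext.zero_comp]
  exact ⟨fun a b => by rw [key a, key b]⟩

/-- LES: vanishing at `X₂` in degree `n+1` together with vanishing of
`Ext¹(X₃, X₁)` gives vanishing at `X₁` in degree `n+1`. -/
lemma ext_subsingleton_X₁ {S : ShortComplex C} (hS : S.ShortExact) (X : C) (n : ℕ)
    (h₂ : Subsingleton (Abelian.Ext.{w} X S.X₂ (n + 1)))
    (hcls : Subsingleton (Abelian.Ext.{w} S.X₃ S.X₁ 1)) :
    Subsingleton (Abelian.Ext.{w} X S.X₁ (n + 1)) := by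
  have key : ∀ x : Abelian.Ext.{w} X S.X₁ (n + 1), x = 0 := by
    intro x
    obtain ⟨x₃, hx₃⟩ := Abelian.Ext.covariant_sequence_exact₁ X hS x
      (Subsingleton.elim _ _) rfl
    rw [← hx₃, Subsingleton.elim hS.extClass 0, Abelian.Ext.comp_zero]
  exact ⟨fun a b => by rw [key a, key b]⟩

variable {𝒳 ω : Set C}

lemma zero_mem_resfin_omega (h : LeftFrobenius.{w} 𝒳 ω) {X : C} (hX : X ∈ 𝒳) :
    (0 : C) ∈ ResFin ω := by
  obtain ⟨W, X', hW, _, _⟩ := h.2.2.2.2 X hX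
  have h0 : (0 : C) ∈ ω := by
    refine h.2.1 (0 : (0 : C) ⟶ W) 0 ?_ hW
    exact (isZero_zero C).eq_of_src _ _
  exact ⟨0, ⟨(0 : C), h0, ⟨Iso.refl _⟩⟩⟩

lemma resfin_omega_subset_rightPerp (h : LeftFrobenius.{w} 𝒳 ω) :
    ∀ {H : C}, H ∈ ResFin ω → H ∈ rightPerp.{w} 𝒳 := by
  have main : ∀ m : ℕ, ∀ H ∈ ResDimLE ω m, ∀ X ∈ 𝒳, extVanish.{w} X H := by
    intro m
    induction m with
    | zero =>
      rintro H ⟨W, hW, ⟨e⟩⟩ X hX i hi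
      exact ext_subsingleton_of_retract_right e.hom e.inv e.hom_inv_id
        (h.2.2.1 X hX W hW i hi)
    | succ m ih =>
      rintro H (hH | ⟨K, W, hK, hW, f, g, z, hse⟩) X hX i hi
      · exact ih H hH X hX i hi
      · exact ext_subsingleton_X₃ hse X i (h.2.2.1 X hX W hW i hi)
          (ih K hK X hX (i + 1) (by omega))
  rintro H ⟨m, hm⟩ X hX
  exact main m H hm X hX

lemma existsB_of_A (h : LeftFrobenius.{w} 𝒳 ω) {S : C}
    (hA : ∃ K X₀, K ∈ ResFin ω ∧ X₀ ∈ 𝒳 ∧ SES K X₀ S) :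
    ∃ H X', H ∈ ResFin ω ∧ X' ∈ 𝒳 ∧ SES S H X' := by
  obtain ⟨K, X₀, ⟨mK, hK⟩, hX₀, f, g, z, hse⟩ := hA
  obtain ⟨W, X'', hW, hX'', m, c, z2, hse2⟩ := h.2.2.2.2 X₀ hX₀
  haveI : Mono m := hse2.mono_f
  have hP : IsPushout m g (pushout.inl m g) (pushout.inr m g) := IsPushout.of_hasPushout m g
  have ses1 : SES S (pushout m g) X'' := ses_pushout₁ hP hse2
  have ses2 : SES K W (pushout m g) := ses_pushout₂ hP hse
  refine ⟨pushout m g, X'', ⟨mK + 1, ?_⟩, hX'', ses1⟩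
  exact Or.inr ⟨K, W, hK, hW, ses2⟩

lemma existsA (h : LeftFrobenius.{w} 𝒳 ω) :
    ∀ n : ℕ, ∀ S ∈ ResDimLE 𝒳 n, ∃ K X₀, K ∈ ResFin ω ∧ X₀ ∈ 𝒳 ∧ SES K X₀ S := by
  intro n
  induction n with
  | zero =>
    rintro S ⟨X₀, hX₀, ⟨e⟩⟩
    exact ⟨0, X₀, zero_mem_resfin_omega h hX₀, hX₀, SES_of_iso e.symm⟩
  | succ n ih =>
    rintro S (hS | ⟨K, X₀, hK, hX₀, f0, g0, z0, hse0⟩)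
    · exact ih S hS
    · obtain ⟨H, X', hH, hX', u, c, zu, hseu⟩ := existsB_of_A h (ih K hK)
      haveI : Mono u := hseu.mono_f
      have hP : IsPushout u f0 (pushout.inl u f0) (pushout.inr u f0) :=
        IsPushout.of_hasPushout u f0
      have sesXP : SES X₀ (pushout u f0) X' := ses_pushout₁ hP hseu
      have sesHP : SES H (pushout u f0) S := ses_pushout₁ hP.flip hse0
      have hP𝒳 : pushout u f0 ∈ 𝒳 := h.1.1 sesXP hX₀ hX'
      exact ⟨H, pushout u f0, hH, hP𝒳, sesHP⟩

end ExtAux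

end Aux

/-- Proposition 2.7 (2). For a left Frobenius pair `(𝒳, ω)` and every
`n ≥ 0`, the pair `(𝒳, 𝒳^⊥)` is a complete cotorsion pair cut along `𝒳^∧_n`. -/
theorem leftFrobenius_completeCutCotorsion_resDimLE
    {C : Type u} [CategoryTheory.Category.{v} C] [CategoryTheory.Abelian C]
    [CategoryTheory.HasExt.{w} C]
    (𝒳 ω : Set C) (h : LeftFrobenius.{w} 𝒳 ω) :
    ∀ n : ℕ, CompleteCutCotorsion.{w} 𝒳 (rightPerp.{w} 𝒳) (ResDimLE 𝒳 n) := by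
  intro n
  refine ⟨⟨⟨h.1.2.2, ?_⟩, ?_⟩, ⟨⟨?_, ?_⟩, ?_⟩⟩
  · -- left cut equality
    apply Set.eq_of_subset_of_subset
    · rintro S ⟨hS𝒳, hSn⟩
      exact ⟨fun Y hY => hY S hS𝒳 1 le_rfl, hSn⟩
    · rintro S ⟨hSperp, hSn⟩
      refine ⟨?_, hSn⟩
      obtain ⟨K, X₀, hK, hX₀, f, g, z, hse⟩ := existsA h n S hSn
      have h1 : Subsingleton (Abelian.Ext.{w} S K 1) :=
        hSperp K (resfin_omega_subset_rightPerp h hK)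
      obtain ⟨i, r, hir⟩ := retract_of_ses_of_ext1 hse h1
      exact h.1.2.2 i r hir hX₀
  · -- left completeness
    intro S hSn
    obtain ⟨K, X₀, hK, hX₀, hses⟩ := existsA h n S hSn
    exact ⟨K, X₀, resfin_omega_subset_rightPerp h hK, hX₀, hses⟩
  · -- right perp closed under summands
    intro X Y i r hir hY X' hX' j hj
    exact ext_subsingleton_of_retract_right i r hir (hY X' hX' j hj)
  · -- right cut equality
    apply Set.eq_of_subset_of_subset
    · rintro S ⟨hSperp, hSn⟩
      exact ⟨fun X hX => hSperp X hX 1 le_rfl, hSn⟩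
    · rintro S ⟨hS1, hSn⟩
      refine ⟨?_, hSn⟩
      obtain ⟨H, X', hH, hX', u, c, zu, hseu⟩ := existsB_of_A h (existsA h n S hSn)
      intro X hX i hi
      obtain ⟨m, rfl⟩ : ∃ m, i = m + 1 := ⟨i - 1, by omega⟩
      exact ext_subsingleton_X₁ hseu X m
        (resfin_omega_subset_rightPerp h hH X hX (m + 1) (by omega))
        (hS1 X' hX')
  · -- right completeness
    intro S hSn
    obtain ⟨H, X', hH, hX', hses⟩ := existsB_of_A h (existsA h n S hSn)
    exact ⟨H, X', resfin_omega_subset_rightPerp h hH, hX', hses⟩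


end CutPaper
end

section
/- Let 𝒮, 𝒜, ℬ be classes of objects in an abelian category 𝒞 and set ω := 𝒜 ∩ ℬ. Assume: (1) 𝒜 is closed under extensions and direct summands; (2) ℬ is closed under direct summands; (3) ω ∩ 𝒮 is a relative cogenerator in 𝒜; (4) (ω ∩ 𝒮)^∧ ⊆ ℬ; (5) Ext^1(A, B) = 0 for all A ∈ 𝒜 ∩ 𝒮, B ∈ ℬ and for all A ∈ 𝒜, B ∈ ℬ ∩ 𝒮. Then (𝒜, ℬ) is a complete cotorsion pair cut along 𝒜^∧ ∩ 𝒮. -/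
namespace CutPaper

open CategoryTheory CategoryTheory.Limits CategoryTheory.Abelian ZeroObject

universe w v u

variable {C : Type u} [Category.{v} C] [Abelian C]

/-! ### Auxiliary lemmas for Statement 7 -/

section Aux

lemma ses_of_iso {X Y Z X' Y' Z' : C} (h : SES X Y Z) (a : X ≅ X') (b : Y ≅ Y') (c : Z ≅ Z') :
    SES X' Y' Z' := by
  obtain ⟨f, g, w, hse⟩ := h
  refine ⟨a.inv ≫ f ≫ b.hom, b.inv ≫ g ≫ c.hom, by simp [reassoc_of% w, w], ?_⟩
  exact ShortComplex.shortExact_of_iso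
    (ShortComplex.isoMk a b c (by simp) (by simp)) hse

lemma ses_biprod (X Y : C) : SES X (X ⊞ Y) Y := by
  refine ⟨biprod.inl, biprod.snd, biprod.inl_snd, ?_⟩
  exact ShortComplex.Splitting.shortExact
    { r := biprod.fst
      s := biprod.inr
      f_r := by simp
      s_g := by simp
      id := by simp [biprod.total] }

/-- Pushing out a SES along a map from the first object. -/
lemma ses_pushout_inr {X Y Z W : C} (f : X ⟶ Y) (g : Y ⟶ Z) (w : f ≫ g = 0)
    (hse : (ShortComplex.mk f g w).ShortExact) (h : X ⟶ W) :
    SES W (pushout f h) Z := by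
  have := hse.mono_f
  have := hse.epi_g
  refine ⟨pushout.inr f h, pushout.desc g 0 (by simp [w]), by rw [pushout.inr_desc], ?_⟩
  have hepi : Epi (pushout.desc g 0 (show f ≫ g = h ≫ 0 by simp [w])) := by
    have h1 : pushout.inl f h ≫ pushout.desc g 0 (show f ≫ g = h ≫ 0 by simp [w]) = g := by rw [pushout.inl_desc]
    exact epi_of_epi_fac h1
  refine ShortComplex.ShortExact.mk' ?_ inferInstance hepi
  apply ShortComplex.exact_of_g_is_cokernel
  refine CokernelCofork.IsColimit.ofπ' _ _ (fun {T} k hk => ?_)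
  have hfk : f ≫ (pushout.inl f h ≫ k) = 0 := by
    rw [← Category.assoc, pushout.condition, Category.assoc, hk, comp_zero]
  obtain ⟨l, hl⟩ := CokernelCofork.IsColimit.desc' hse.gIsCokernel (pushout.inl f h ≫ k) hfk
  refine ⟨l, ?_⟩
  apply pushout.hom_ext
  · rw [pushout.inl_desc_assoc]; exact hl
  · rw [pushout.inr_desc_assoc, zero_comp]; exact hk.symm

/-- The complementary sequence for a pushout of an epi along a mono. -/
lemma ses_pushout_inl {B A S W : C} (i : B ⟶ A) (p : A ⟶ S) (w : i ≫ p = 0)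
    (hse : (ShortComplex.mk i p w).ShortExact) (m : A ⟶ W) [Mono m] :
    SES B W (pushout m p) := by
  have := hse.mono_f
  have := hse.epi_g
  refine ⟨i ≫ m, pushout.inl m p,
    by rw [Category.assoc, pushout.condition, ← Category.assoc, w, zero_comp], ?_⟩
  refine ShortComplex.ShortExact.mk' ?_ inferInstance inferInstance
  apply ShortComplex.exact_of_g_is_cokernel
  refine CokernelCofork.IsColimit.ofπ' _ _ (fun {T} k hk => ?_)
  have hik : i ≫ (m ≫ k) = 0 := by
    have : (i ≫ m) ≫ k = 0 := hk
    rw [← Category.assoc]; exact this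
  obtain ⟨u, hu⟩ := CokernelCofork.IsColimit.desc' hse.gIsCokernel (m ≫ k) hik
  have hu' : p ≫ u = m ≫ k := hu
  exact ⟨pushout.desc k u hu'.symm, pushout.inl_desc _ _ _⟩

lemma ses_pushout_both {K A S B A' : C} (h₁ : SES K A S) (h₂ : SES K B A') :
    ∃ P : C, SES B P S ∧ SES A P A' := by
  obtain ⟨i, p, w₁, hse₁⟩ := h₁
  obtain ⟨j, q, w₂, hse₂⟩ := h₂
  refine ⟨pushout i j, ses_pushout_inr i p w₁ hse₁ j, ?_⟩
  exact ses_of_iso (ses_pushout_inr j q w₂ hse₂ i) (Iso.refl _) (pushoutSymmetry j i) (Iso.refl _)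

lemma ses_pushout_mixed {B A S W A' : C} (h₁ : SES B A S) (h₂ : SES A W A') :
    ∃ Q : C, SES S Q A' ∧ SES B W Q := by
  obtain ⟨i, p, w₁, hse₁⟩ := h₁
  obtain ⟨m, c, w₂, hse₂⟩ := h₂
  have := hse₂.mono_f
  exact ⟨pushout m p, ses_pushout_inr m c w₂ hse₂ p, ses_pushout_inl i p w₁ hse₁ m⟩

end Aux

section AuxExt

variable [HasExt.{w} C]

section DC
variable {w' : _} [HasDerivedCategory.{w'} C]

/-- The composition `single ⋙ H⁰` is isomorphic to the identity. -/
noncomputable def homologyIso₀ :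
    DerivedCategory.singleFunctor C 0 ⋙ DerivedCategory.homologyFunctor C 0 ≅ 𝟭 C :=
  Functor.isoWhiskerRight ((SingleFunctors.evaluation _ _ 0).mapIso
      (DerivedCategory.singleFunctorsPostcompQIso C)) (DerivedCategory.homologyFunctor C 0)
  ≪≫ Functor.associator _ _ _
  ≪≫ Functor.isoWhiskerLeft _ (DerivedCategory.homologyFunctorFactors C 0)
  ≪≫ HomologicalComplex.homologyFunctorSingleIso C _ 0

/-- Forgetting the (trivial) shift on a `ShiftedHom` in degree `0`. -/
noncomputable def unshift {X Y : DerivedCategory C} (φ : ShiftedHom X Y ((0:ℕ):ℤ)) : X ⟶ Y :=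
  (ShiftedHom.homEquiv ((0:ℕ):ℤ) (by simp)).symm φ

omit [HasExt.{w} C] in
lemma unshift_comp_mk₀ {X Y Z : DerivedCategory C} (φ : ShiftedHom X Y ((0:ℕ):ℤ)) (g : Y ⟶ Z) :
    unshift (φ.comp (ShiftedHom.mk₀ ((0:ℕ):ℤ) (by simp) g) (by simp)) = unshift φ ≫ g := by
  rw [ShiftedHom.comp_mk₀]
  dsimp [unshift, ShiftedHom.homEquiv]
  rw [Category.assoc]
  erw [(shiftFunctorZero' (DerivedCategory C) ((0:ℕ):ℤ) (by simp)).hom.naturality g]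
  simp

omit [HasExt.{w} C] in
lemma unshift_mk₀_comp {X Y Z : DerivedCategory C} (f : X ⟶ Y) (φ : ShiftedHom Y Z ((0:ℕ):ℤ)) :
    unshift ((ShiftedHom.mk₀ ((0:ℕ):ℤ) (by simp) f).comp φ (by simp)) = f ≫ unshift φ := by
  rw [ShiftedHom.mk₀_comp]
  dsimp [unshift, ShiftedHom.homEquiv]
  rw [Category.assoc]

lemma unshift_mk₀ {X Y : C} (f : X ⟶ Y) :
    unshift (Abelian.Ext.mk₀ f).hom = (DerivedCategory.singleFunctor C 0).map f := by
  rw [Abelian.Ext.mk₀_hom]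
  exact (ShiftedHom.homEquiv _ _).symm_apply_apply _

/-- The morphism in `C` attached to a degree-zero `Ext` class. -/
noncomputable def extToHom {X Y : C} (x : Abelian.Ext.{w} X Y 0) : X ⟶ Y :=
  homologyIso₀.inv.app X ≫ (DerivedCategory.homologyFunctor C 0).map (unshift x.hom)
    ≫ homologyIso₀.hom.app Y

lemma extToHom_mk₀ {X Y : C} (f : X ⟶ Y) : extToHom (Abelian.Ext.mk₀ f) = f := by
  rw [extToHom, unshift_mk₀]
  have := homologyIso₀ (C := C) |>.hom.naturality f
  dsimp at this
  rw [this]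
  simp

lemma extToHom_comp_mk₀ {X Y Z : C} (x : Abelian.Ext.{w} X Y 0) (g : Y ⟶ Z) :
    extToHom (x.comp (Abelian.Ext.mk₀ g) (add_zero 0)) = extToHom x ≫ g := by
  rw [extToHom, Abelian.Ext.comp_hom, Abelian.Ext.mk₀_hom]
  rw [unshift_comp_mk₀, Functor.map_comp]
  have := homologyIso₀ (C := C) |>.hom.naturality g
  dsimp at this
  slice_lhs 3 4 => rw [this]
  rw [extToHom]
  simp

lemma extToHom_mk₀_comp {X Y Z : C} (f : X ⟶ Y) (x : Abelian.Ext.{w} Y Z 0) :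
    extToHom ((Abelian.Ext.mk₀ f).comp x (zero_add 0)) = f ≫ extToHom x := by
  rw [extToHom, Abelian.Ext.comp_hom, Abelian.Ext.mk₀_hom]
  rw [unshift_mk₀_comp, Functor.map_comp]
  have := homologyIso₀ (C := C) |>.inv.naturality f
  dsimp at this
  slice_lhs 1 2 => rw [← this]
  rw [extToHom]
  simp

end DC

lemma exists_section_of_ext1_subsingleton {S : ShortComplex C} (hS : S.ShortExact)
    (h : Subsingleton (Abelian.Ext.{w} S.X₃ S.X₁ 1)) :
    ∃ s : S.X₃ ⟶ S.X₂, s ≫ S.g = 𝟙 S.X₃ := by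
  obtain ⟨x₂, hx₂⟩ := Abelian.Ext.covariant_sequence_exact₃ S.X₃ hS
    (Abelian.Ext.mk₀ (𝟙 S.X₃)) rfl (Subsingleton.elim _ _)
  letI := HasDerivedCategory.standard C
  refine ⟨extToHom x₂, ?_⟩
  have := congrArg (extToHom (C := C)) hx₂
  rwa [extToHom_comp_mk₀, extToHom_mk₀] at this

lemma exists_retraction_of_ext1_subsingleton {S : ShortComplex C} (hS : S.ShortExact)
    (h : Subsingleton (Abelian.Ext.{w} S.X₃ S.X₁ 1)) :
    ∃ r : S.X₂ ⟶ S.X₁, S.f ≫ r = 𝟙 S.X₁ := by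
  obtain ⟨x₂, hx₂⟩ := Abelian.Ext.contravariant_sequence_exact₁ hS S.X₁
    (Abelian.Ext.mk₀ (𝟙 S.X₁)) rfl (Subsingleton.elim _ _)
  letI := HasDerivedCategory.standard C
  refine ⟨extToHom x₂, ?_⟩
  have := congrArg (extToHom (C := C)) hx₂
  rwa [extToHom_mk₀_comp, extToHom_mk₀] at this

end AuxExt


/-- Proposition 2.22. Under conditions (1)–(5) on classes `𝒮, 𝒜, ℬ` with
`ω := 𝒜 ∩ ℬ`, the pair `(𝒜, ℬ)` is a complete cotorsion pair cut along `𝒜^∧ ∩ 𝒮`. -/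
theorem completeCutCotorsion_of_relativeCogenerator
    {C : Type u} [CategoryTheory.Category.{v} C] [CategoryTheory.Abelian C]
    [CategoryTheory.HasExt.{w} C]
    (𝒮 𝒜 ℬ : Set C)
    (h1 : ClosedUnderExtensions 𝒜 ∧ ClosedUnderDirectSummands 𝒜)
    (h2 : ClosedUnderDirectSummands ℬ)
    (h3 : IsRelativeCogenerator (𝒜 ∩ ℬ ∩ 𝒮) 𝒜)
    (h4 : ResFin (𝒜 ∩ ℬ ∩ 𝒮) ⊆ ℬ)
    (h5 : (∀ A ∈ 𝒜 ∩ 𝒮, ∀ B ∈ ℬ, ext1Zero.{w} A B) ∧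
          (∀ A ∈ 𝒜, ∀ B ∈ ℬ ∩ 𝒮, ext1Zero.{w} A B)) :
    CompleteCutCotorsion.{w} 𝒜 ℬ (ResFin 𝒜 ∩ 𝒮) := by
  obtain ⟨hAext, hAsum⟩ := h1
  -- The key mutual induction on the `𝒜`-resolution dimension.
  have key : ∀ n : ℕ, ∀ S ∈ ResDimLE 𝒜 n,
      (∃ B A, B ∈ ResFin (𝒜 ∩ ℬ ∩ 𝒮) ∧ A ∈ 𝒜 ∧ SES B A S) ∧
      (∃ B' A', B' ∈ ResFin (𝒜 ∩ ℬ ∩ 𝒮) ∧ A' ∈ 𝒜 ∧ SES S B' A') := by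
    intro n
    induction n with
    | zero =>
      rintro S ⟨A, hA, ⟨e⟩⟩
      obtain ⟨W, A'', hW, hA'', hses⟩ := h3.2 A hA
      constructor
      · refine ⟨W, W ⊞ A, ⟨0, W, hW, ⟨Iso.refl W⟩⟩, ?_, ?_⟩
        · exact hAext (ses_biprod W A) (h3.1 hW) hA
        · exact ses_of_iso (ses_biprod W A) (Iso.refl _) (Iso.refl _) e.symm
      · exact ⟨W, A'', ⟨0, W, hW, ⟨Iso.refl W⟩⟩, hA'',
          ses_of_iso hses e.symm (Iso.refl _) (Iso.refl _)⟩
    | succ n ih =>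
      intro S hS
      have hP : ∃ B A, B ∈ ResFin (𝒜 ∩ ℬ ∩ 𝒮) ∧ A ∈ 𝒜 ∧ SES B A S := by
        rcases hS with hS | ⟨K, A₀, hK, hA₀, sesKAS⟩
        · exact (ih S hS).1
        · obtain ⟨B_K, A_K, hBK, hAK, sesK⟩ := (ih K hK).2
          obtain ⟨P, hP1, hP2⟩ := ses_pushout_both sesKAS sesK
          exact ⟨B_K, P, hBK, hAext hP2 hA₀ hAK, hP1⟩
      refine ⟨hP, ?_⟩
      obtain ⟨B, A, hB, hA, sesBAS⟩ := hP
      obtain ⟨W, A'', hW, hA'', sesAW⟩ := h3.2 A hA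
      obtain ⟨Q, hQ1, hQ2⟩ := ses_pushout_mixed sesBAS sesAW
      obtain ⟨k, hk⟩ := hB
      exact ⟨Q, A'', ⟨k + 1, Or.inr ⟨B, W, hk, hW, hQ2⟩⟩, hA'', hQ1⟩
  have complete_left : ∀ S ∈ ResFin 𝒜 ∩ 𝒮, ∃ B₀ A₀, B₀ ∈ ℬ ∧ A₀ ∈ 𝒜 ∧ SES B₀ A₀ S := by
    rintro S ⟨⟨n, hn⟩, -⟩
    obtain ⟨B, A, hB, hA, hses⟩ := (key n S hn).1
    exact ⟨B, A, h4 hB, hA, hses⟩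
  have complete_right : ∀ S ∈ ResFin 𝒜 ∩ 𝒮, ∃ B₀ A₀, B₀ ∈ ℬ ∧ A₀ ∈ 𝒜 ∧ SES S B₀ A₀ := by
    rintro S ⟨⟨n, hn⟩, -⟩
    obtain ⟨B', A', hB', hA', hses⟩ := (key n S hn).2
    exact ⟨B', A', h4 hB', hA', hses⟩
  have left_eq : 𝒜 ∩ (ResFin 𝒜 ∩ 𝒮) = leftPerp1.{w} ℬ ∩ (ResFin 𝒜 ∩ 𝒮) := by
    ext X
    constructor
    · rintro ⟨hXA, hfin, hXS⟩
      exact ⟨fun B hB => h5.1 X ⟨hXA, hXS⟩ B hB, hfin, hXS⟩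
    · rintro ⟨hperp, hfin, hXS⟩
      refine ⟨?_, hfin, hXS⟩
      obtain ⟨n, hn⟩ := hfin
      obtain ⟨B, A, hB, hA, f, g, w0, hse⟩ := (key n X hn).1
      have hsub : Subsingleton (Abelian.Ext.{w} X B 1) := hperp B (h4 hB)
      obtain ⟨s, hs⟩ := exists_section_of_ext1_subsingleton hse hsub
      exact hAsum s g hs hA
  have right_eq : ℬ ∩ (ResFin 𝒜 ∩ 𝒮) = rightPerp1.{w} 𝒜 ∩ (ResFin 𝒜 ∩ 𝒮) := by
    ext X
    constructor
    · rintro ⟨hXB, hfin, hXS⟩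
      exact ⟨fun A hA => h5.2 A hA X ⟨hXB, hXS⟩, hfin, hXS⟩
    · rintro ⟨hperp, hfin, hXS⟩
      refine ⟨?_, hfin, hXS⟩
      obtain ⟨n, hn⟩ := hfin
      obtain ⟨B', A', hB', hA', f, g, w0, hse⟩ := (key n X hn).2
      have hsub : Subsingleton (Abelian.Ext.{w} A' X 1) := hperp A' hA'
      obtain ⟨r, hr⟩ := exists_retraction_of_ext1_subsingleton hse hsub
      exact h2 f r hr (h4 hB')
  exact ⟨⟨⟨hAsum, left_eq⟩, complete_left⟩, ⟨⟨h2, right_eq⟩, complete_right⟩⟩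


end CutPaper
end
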